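/- Suppose K satisfies hypotheses (H) and let M be a K-ℵ₁-saturated L-structure. Local character of algebraic independence: let ā be a finite tuple from M, let (A_i)_{i<ω₁} be an increasing continuous chain of countable substructures of M (continuous meaning A_λ = ⋃_{i<λ} A_i for every limit ordinal λ < ω₁), and let A_{ω₁} = ⋃_{i<ω₁} A_i. Then there is an ordinal α < ω₁ such that ⟨A_α ∪ ā⟩ ∩ A_{ω₁} = A_α, where ⟨A_α ∪ ā⟩ denotes the substructure of M generated by A_α together with the entries of ā. -/

import Mathlib

open FirstOrder FirstOrder.Language CategoryTheory Cardinal Set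

namespace FraisseFreeAmalg

variable (L : FirstOrder.Language.{0, 0})

/-- The class is closed under isomorphism. -/
def IsoClosed (K : Set (Bundled.{0} L.Structure)) : Prop :=
  ∀ A ∈ K, ∀ B : Bundled.{0} L.Structure, Nonempty (A ≃[L] B) → B ∈ K

/-- All members of the class are finite or countably infinite. -/
def SmallMembers (K : Set (Bundled.{0} L.Structure)) : Prop :=
  ∀ A ∈ K, Countable A

/-- Condition (1) of (H): universal axiomatizability. -/
def UnivAx (K : Set (Bundled.{0} L.Structure)) : Prop :=
  ∀ A : Bundled.{0} L.Structure, Countable A → A ∉ K →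
    ∃ (n : ℕ) (φ : L.Formula (Fin n)) (a : Fin n → A),
      φ.IsQF ∧ φ.Realize a ∧ ∀ B ∈ K, ∀ b : Fin n → B, ¬ φ.Realize b

/-- Condition (2) of (H): quantifier elimination. -/
def QElim (K : Set (Bundled.{0} L.Structure)) : Prop :=
  ∀ (m n : ℕ) (φ : L.Formula (Fin m ⊕ Fin n)), φ.IsQF →
    ∀ A ∈ K, ∀ (a : Fin m → A) (b : Fin n → A), φ.Realize (Sum.elim a b) →
      ∃ ψ : L.Formula (Fin m), ψ.IsQF ∧ ψ.Realize a ∧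
        ∀ A' ∈ K, ∀ a' : Fin m → A', ψ.Realize a' →
          ∃ B' ∈ K, ∃ (i : A' ↪[L] B') (b' : Fin n → B'),
            φ.Realize (Sum.elim (fun k => i (a' k)) b')

/-- `D` together with `iA, iB` is a free amalgam of `A` and `B` over `C` in the class `K`. -/
def IsFreeAmalgam (K : Set (Bundled.{0} L.Structure))
    (C A B : Bundled.{0} L.Structure) (cA : C ↪[L] A) (cB : C ↪[L] B)
    (D : Bundled.{0} L.Structure) (iA : A ↪[L] D) (iB : B ↪[L] D) : Prop :=
  (∀ c : C, iA (cA c) = iB (cB c)) ∧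
  (Set.range iA ∩ Set.range iB = Set.range fun c : C => iA (cA c)) ∧
  Substructure.closure L (Set.range iA ∪ Set.range iB) = ⊤ ∧
  ∀ D' ∈ K, ∀ (φA : A →[L] D') (φB : B →[L] D'),
    (∀ c : C, φA (cA c) = φB (cB c)) →
    ∃! φ : D →[L] D',
      (∀ a : A, φ (iA a) = φA a) ∧ (∀ b : B, φ (iB b) = φB b)

/-- Condition (3) of (H): free amalgamation (together with agreement on the
substructures generated by the constants). -/
def FreeAmalg (K : Set (Bundled.{0} L.Structure)) : Prop :=
  (∀ A ∈ K, ∀ B ∈ K,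
      Nonempty ((⊥ : L.Substructure A) ≃[L] (⊥ : L.Substructure B))) ∧
  ∀ (C A B : Bundled.{0} L.Structure), C ∈ K → A ∈ K → B ∈ K →
    ∀ (cA : C ↪[L] A) (cB : C ↪[L] B),
      ∃ D ∈ K, ∃ (iA : A ↪[L] D) (iB : B ↪[L] D),
        IsFreeAmalgam L K C A B cA cB D iA iB

/-- Condition (4) of (H): generic element. -/
def GenericElem (K : Set (Bundled.{0} L.Structure)) : Prop :=
  ∃ X ∈ K, ∃ x : X, Substructure.closure L ({x} : Set X) = ⊤ ∧
    ∀ A ∈ K, ∀ a : A, ∃ φ : X →[L] A, φ x = a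

/-- Condition (5) of (H): algebraically independent 3-amalgamation. -/
def ThreeAmalg (K : Set (Bundled.{0} L.Structure)) : Prop :=
  ∀ (E A B : Bundled.{0} L.Structure) (Bb Dd : Fin 2 → Bundled.{0} L.Structure),
    E ∈ K → A ∈ K → B ∈ K → (∀ i, Bb i ∈ K) → (∀ i, Dd i ∈ K) →
    ∀ (eA : E ↪[L] A) (eB : ∀ i, E ↪[L] Bb i)
      (aD : ∀ i, A ↪[L] Dd i) (bD : ∀ i, Bb i ↪[L] Dd i)
      (bB : ∀ i, Bb i ↪[L] B),
      (∀ i, ∀ e : E, aD i (eA e) = bD i (eB i e)) →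
      (∀ e : E, bB 0 (eB 0 e) = bB 1 (eB 1 e)) →
      (∀ i, Set.range (aD i) ∩ Set.range (bD i) =
        Set.range fun e : E => aD i (eA e)) →
      (Set.range (bB 0) ∩ Set.range (bB 1) =
        Set.range fun e : E => bB 0 (eB 0 e)) →
      ∃ D ∈ K, ∃ (dD : ∀ i, Dd i ↪[L] D) (jB : B ↪[L] D),
        (∀ i, ∀ b : Bb i, dD i (bD i b) = jB (bB i b)) ∧
        (∀ a : A, dD 0 (aD 0 a) = dD 1 (aD 1 a)) ∧
        (∀ i, Set.range (dD i) ∩ Set.range jB =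
          Set.range fun b : Bb i => dD i (bD i b)) ∧
        (Set.range (dD 0) ∩ Set.range (dD 1) =
          Set.range fun a : A => dD 0 (aD 0 a))

/-- The hypotheses (H) on the class `K`. -/
structure HypH (K : Set (Bundled.{0} L.Structure)) : Prop where
  small : SmallMembers L K
  isoClosed : IsoClosed L K
  univAx : UnivAx L K
  qElim : QElim L K
  freeAmalg : FreeAmalg L K
  generic : GenericElem L K
  threeAmalg : ThreeAmalg L K

/-- `M` is `K`-ℵ₁-saturated. -/
def KSat (K : Set (Bundled.{0} L.Structure)) (M : Type) [L.Structure M] : Prop :=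
  (∀ S : L.Substructure M, Cardinal.mk S < Cardinal.aleph 1 → (Bundled.of (↥S) : Bundled L.Structure) ∈ K) ∧
  ∀ U ∈ K, ∀ B ∈ K, ∀ (f₀ : U ↪[L] M) (f₁ : U ↪[L] B),
    ∃ g : B ↪[L] M, ∀ u : U, g (f₁ u) = f₀ u

/-- Γ-independence of countable substructures of `M`. -/
def GammaIndep (M : Type) [L.Structure M] (E A B : L.Substructure M) : Prop :=
  ∀ D' : L.Substructure M, Countable D' →
    ∀ (φA : A →[L] D') (φB : B →[L] D'),
      (∀ (x : M) (hA : x ∈ A) (hB : x ∈ B), x ∈ E → φA ⟨x, hA⟩ = φB ⟨x, hB⟩) →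
      ∃! φ : ↥(A ⊔ B) →[L] D',
        (∀ (x : M) (h : x ∈ A), φ ⟨x, (le_sup_left : A ≤ A ⊔ B) h⟩ = φA ⟨x, h⟩) ∧
        (∀ (x : M) (h : x ∈ B), φ ⟨x, (le_sup_right : B ≤ A ⊔ B) h⟩ = φB ⟨x, h⟩)

/-- M-independence: forcing base monotonicity on algebraic independence. -/
def MIndep (M : Type) [L.Structure M] (E A B : L.Substructure M) : Prop :=
  ∀ C : L.Substructure M, E ≤ C → C ≤ B → (A ⊔ C) ⊓ B = C


/-- Under (H), in a `K`-ℵ₁-saturated structure, algebraic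
independence has local character along increasing continuous ω₁-chains of
countable substructures. -/
theorem statement_16 (L : FirstOrder.Language.{0, 0}) (hL : Countable L.Symbols)
    (K : Set (Bundled.{0} L.Structure)) (hK : HypH L K)
    (M : Type) [L.Structure M] (hM : KSat L K M)
    (n : ℕ) (a : Fin n → M)
    (A : Ordinal.{0} → L.Substructure M)
    (hmono : ∀ i j : Ordinal.{0}, i ≤ j → j < (aleph 1).ord → A i ≤ A j)
    (hcnt : ∀ i : Ordinal.{0}, i < (aleph 1).ord → Countable (A i))
    (hcont : ∀ l : Ordinal.{0}, l < (aleph 1).ord → Order.IsSuccLimit l →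
      A l = ⨆ i : {i : Ordinal.{0} // i < l}, A i) :
    ∃ α < (aleph 1).ord,
      (A α ⊔ Substructure.closure L (Set.range a)) ⊓
          (⨆ i : {i : Ordinal.{0} // i < (aleph 1).ord}, A i) = A α := by
  classical
  set ω₁ : Ordinal.{0} := (aleph 1).ord with hω₁
  set R : L.Substructure M := Substructure.closure L (Set.range a) with hR
  set T : L.Substructure M := ⨆ i : {i : Ordinal.{0} // i < ω₁}, A i with hT
  have hω₁lim : Order.IsSuccLimit ω₁ := Cardinal.isSuccLimit_ord (aleph0_le_aleph 1)
  have hcof : ℵ₀ < ω₁.cof := by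
    rw [hω₁, Cardinal.isRegular_aleph_one.cof_eq]
    exact aleph0_lt_aleph_one
  haveI : Nonempty {i : Ordinal.{0} // i < ω₁} := ⟨⟨0, hω₁lim.pos⟩⟩
  haveI : Countable (Σ l, L.Functions l) := by
    haveI := hL
    exact (Sum.inl_injective (α := Σ l, L.Functions l)
      (β := Σ n, L.Relations n)).countable
  have hdir : Directed (· ≤ ·) (fun i : {i : Ordinal.{0} // i < ω₁} => A i) := by
    rintro ⟨i, hi⟩ ⟨j, hj⟩
    exact ⟨⟨max i j, max_lt hi hj⟩,
      hmono i (max i j) (le_max_left _ _) (max_lt hi hj),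
      hmono j (max i j) (le_max_right _ _) (max_lt hi hj)⟩
  -- key step: a bound function
  have key : ∀ β, β < ω₁ → ∃ γ, β < γ ∧ γ < ω₁ ∧ ((A β ⊔ R) ⊓ T ≤ A γ) := by
    intro β hβ
    have hAβc : ((A β : Set M)).Countable := by
      haveI := hcnt β hβ
      exact Set.countable_coe_iff.mp inferInstance
    have hXc : Countable ((A β ⊔ R) ⊓ T : L.Substructure M) := by
      have h1 : (((A β : Set M)) ∪ Set.range a).Countable :=
        hAβc.union (Set.finite_range a).countable
      have h2 : Countable (Substructure.closure L ((A β : Set M) ∪ Set.range a)) :=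
        h1.substructure_closure L
      have hle : ((A β ⊔ R) ⊓ T : L.Substructure M) ≤
          Substructure.closure L ((A β : Set M) ∪ Set.range a) := by
        rw [Substructure.closure_union, Substructure.closure_eq]
        exact le_trans inf_le_left le_rfl
      have : ((((A β ⊔ R) ⊓ T : L.Substructure M) : Set M)).Countable :=
        (Set.countable_coe_iff.mp h2).mono (SetLike.coe_subset_coe.mpr hle)
      exact this.to_subtype
    have hx : ∀ x : ((A β ⊔ R) ⊓ T : L.Substructure M),
        ∃ i : {i : Ordinal.{0} // i < ω₁}, x.1 ∈ A i := by
      intro x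
      have := x.2
      rw [Substructure.mem_inf] at this
      exact (Substructure.mem_iSup_of_directed hdir).mp this.2
    choose ix hix using hx
    have hγ₀ : (⨆ x, (ix x).1) < ω₁ :=
      Ordinal.iSup_lt_ord (lt_of_le_of_lt mk_le_aleph0 hcof) fun x => (ix x).2
    have hβ1 : β + 1 < ω₁ := by
      rw [Ordinal.add_one_eq_succ]; exact hω₁lim.succ_lt hβ
    refine ⟨max (β + 1) (⨆ x, (ix x).1), ?_, max_lt hβ1 hγ₀, ?_⟩
    · calc β < β + 1 := by rw [Ordinal.add_one_eq_succ]; exact Order.lt_succ β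
        _ ≤ _ := le_max_left _ _
    · intro x hx'
      have h1 : (ix ⟨x, hx'⟩).1 ≤ max (β + 1) (⨆ x, (ix x).1) :=
        le_trans (Ordinal.le_iSup (fun x => (ix x).1) ⟨x, hx'⟩) (le_max_right _ _)
      exact hmono _ _ h1 (max_lt hβ1 hγ₀) (hix ⟨x, hx'⟩)
  -- the iteration
  let F : Ordinal.{0} → Ordinal.{0} := fun β =>
    if h : β < ω₁ then Classical.choose (key β h) else 0
  have hF : ∀ β (h : β < ω₁), β < F β ∧ F β < ω₁ ∧ ((A β ⊔ R) ⊓ T ≤ A (F β)) := by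
    intro β h
    simp only [F, dif_pos h]
    exact Classical.choose_spec (key β h)
  let s : ℕ → Ordinal.{0} := fun m => F^[m] 0
  have hs0 : s 0 = 0 := rfl
  have hssucc : ∀ m, s (m + 1) = F (s m) := fun m =>
    Function.iterate_succ_apply' F m 0
  have hslt : ∀ m, s m < ω₁ := by
    intro m
    induction m with
    | zero => exact hω₁lim.pos
    | succ m ih => rw [hssucc]; exact (hF (s m) ih).2.1
  have hsmono : ∀ m, s m < s (m + 1) := by
    intro m; rw [hssucc]; exact (hF (s m) (hslt m)).1
  set α : Ordinal.{0} := ⨆ m, s m with hαdef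
  have hα : α < ω₁ := Ordinal.iSup_lt_ord (by rw [mk_nat]; exact hcof) hslt
  have hsleα : ∀ m, s m ≤ α := fun m => Ordinal.le_iSup s m
  have hsltα : ∀ m, s m < α := fun m => lt_of_lt_of_le (hsmono m) (hsleα (m + 1))
  have hαlim : Order.IsSuccLimit α := by
    rw [Ordinal.isSuccLimit_iff]
    constructor
    · exact ne_of_gt (lt_of_le_of_lt zero_le (hsltα 0))
    · refine Order.isSuccPrelimit_of_succ_lt ?_
      intro b hb
      obtain ⟨m, hm⟩ := Ordinal.lt_iSup_iff.mp hb
      exact lt_of_le_of_lt (Order.succ_le_of_lt hm) (hsltα m)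
  refine ⟨α, hα, le_antisymm ?_ (le_inf le_sup_left
    (le_iSup (fun i : {i : Ordinal.{0} // i < ω₁} => A i) ⟨α, hα⟩))⟩
  intro x hx
  rw [Substructure.mem_inf] at hx
  obtain ⟨hx1, hx2⟩ := hx
  -- x ∈ A α ⊔ R ≤ ⨆ m, (A (s m) ⊔ R)
  have hsub : A α ⊔ R ≤ ⨆ m, (A (s m) ⊔ R) := by
    refine sup_le ?_ (le_trans le_sup_right (le_iSup (fun m => A (s m) ⊔ R) 0))
    rw [hcont α hα hαlim]
    refine iSup_le ?_
    rintro ⟨i, hi⟩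
    obtain ⟨m, hm⟩ := Ordinal.lt_iSup_iff.mp hi
    exact le_trans (hmono i (s m) hm.le (hslt m))
      (le_trans le_sup_left (le_iSup (fun m => A (s m) ⊔ R) m))
  have hdir2 : Directed (· ≤ ·) (fun m : ℕ => A (s m) ⊔ R) := by
    have hsm : ∀ p q : ℕ, p ≤ q → s p ≤ s q := by
      intro p q hpq
      induction q with
      | zero => simp [Nat.le_zero.mp hpq]
      | succ q ih =>
        rcases Nat.lt_or_ge p (q + 1) with h | h
        · exact le_trans (ih (Nat.lt_succ_iff.mp h)) (hsmono q).le
        · rw [Nat.le_antisymm hpq h]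
      
    intro p q
    exact ⟨max p q,
      sup_le_sup_right (hmono _ _ (hsm p _ (le_max_left p q)) (hslt _)) R,
      sup_le_sup_right (hmono _ _ (hsm q _ (le_max_right p q)) (hslt _)) R⟩
  have hx1' : x ∈ ⨆ m, (A (s m) ⊔ R) := hsub hx1
  obtain ⟨m, hm⟩ := (Substructure.mem_iSup_of_directed hdir2).mp hx1'
  have hxm : x ∈ (A (s m) ⊔ R) ⊓ T := Substructure.mem_inf.mpr ⟨hm, hx2⟩
  have := (hF (s m) (hslt m)).2.2 hxm
  rw [← hssucc] at this
  exact hmono (s (m + 1)) α (hsleα (m + 1)) hα this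


end FraisseFreeAmalg
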